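/- Let Y₁ ⪯ Y₂ be symmetric positive definite matrices (Y₂ − Y₁ ⪰ 0), A invertible, W ⪰ 0. Then (A Y₁⁻¹ Aᵀ + W)⁻¹ ⪯ (A Y₂⁻¹ Aᵀ + W)⁻¹, i.e., the Kalman prediction map is monotone in the Loewner order. -/

import Mathlib

open Matrix

/-- If `X ⪯ Z` are positive definite then `Z⁻¹ ⪯ X⁻¹`. -/
lemma inv_sub_inv_posSemidef {n : ℕ} {X Z : Matrix (Fin n) (Fin n) ℝ}
    (hX : X.PosDef) (hZ : Z.PosDef) (h : (Z - X).PosSemidef) :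
    (X⁻¹ - Z⁻¹).PosSemidef := by
  have hXu : IsUnit X.det := hX.det_pos.ne'.isUnit
  have hZu : IsUnit Z.det := hZ.det_pos.ne'.isUnit
  have hZs : Zᵀ = Z := by
    simpa [conjTranspose_eq_transpose_of_trivial] using hZ.isHermitian.eq
  have hZi : Z⁻¹ᵀ = Z⁻¹ := by
    rw [transpose_nonsing_inv, hZs]
  have hD : (Z - X)ᵀ = Z - X := by
    simpa [conjTranspose_eq_transpose_of_trivial] using h.isHermitian.eq
  have key : X⁻¹ - Z⁻¹ =
      ((Z - X) * Z⁻¹)ᵀ * X⁻¹ * ((Z - X) * Z⁻¹) + Z⁻¹ᵀ * (Z - X) * Z⁻¹ := by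
    rw [transpose_mul, hZi, hD]
    simp only [Matrix.sub_mul, Matrix.mul_sub, Matrix.mul_assoc,
      Matrix.nonsing_inv_mul_cancel_left _ _ hXu,
      Matrix.nonsing_inv_mul_cancel_left _ _ hZu,
      Matrix.mul_nonsing_inv_cancel_left _ _ hXu,
      Matrix.mul_nonsing_inv _ hXu, Matrix.mul_nonsing_inv _ hZu,
      Matrix.nonsing_inv_mul _ hXu, Matrix.nonsing_inv_mul _ hZu,
      Matrix.mul_one, Matrix.one_mul]
    abel
  rw [key]
  refine PosSemidef.add ?_ ?_
  · have := hX.posSemidef.inv.conjTranspose_mul_mul_same ((Z - X) * Z⁻¹)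
    simpa [conjTranspose_eq_transpose_of_trivial] using this
  · have := h.conjTranspose_mul_mul_same Z⁻¹
    simpa [conjTranspose_eq_transpose_of_trivial] using this

/-- Conjugation of a positive definite matrix by an invertible matrix. -/
lemma conj_posDef {n : ℕ} {Y : Matrix (Fin n) (Fin n) ℝ} (A : Matrix (Fin n) (Fin n) ℝ)
    (hA : IsUnit A.det) (hY : Y.PosDef) : (A * Y * Aᵀ).PosDef := by
  refine PosDef.of_dotProduct_mulVec_pos ?_ ?_
  · have := (hY.posSemidef.mul_mul_conjTranspose_same A).isHermitian
    simpa [conjTranspose_eq_transpose_of_trivial, Matrix.mul_assoc] using this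
  · intro x hx
    have hAT : IsUnit Aᵀ := (Matrix.isUnit_iff_isUnit_det _).2 (by simpa using hA)
    have hinj := Matrix.mulVec_injective_iff_isUnit.mpr hAT
    have hne : Aᵀ *ᵥ x ≠ 0 := fun hc => hx (hinj (by simpa using hc))
    have h2 := hY.dotProduct_mulVec_pos hne
    have h1 : star x ⬝ᵥ (A * Y * Aᵀ) *ᵥ x = star (Aᵀ *ᵥ x) ⬝ᵥ Y *ᵥ (Aᵀ *ᵥ x) := by
      rw [star_trivial, star_trivial, ← mulVec_mulVec, ← mulVec_mulVec,
        dotProduct_mulVec, ← mulVec_transpose]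
    rw [h1]
    exact h2

/-- Loewner monotonicity of the Kalman prediction map: if `Y₁ ⪯ Y₂` are positive definite,
`A` invertible, `W ⪰ 0`, then `(A Y₁⁻¹ Aᵀ + W)⁻¹ ⪯ (A Y₂⁻¹ Aᵀ + W)⁻¹`. -/
theorem prediction_loewner_monotone {n : ℕ}
    (A W Y₁ Y₂ : Matrix (Fin n) (Fin n) ℝ)
    (hA : IsUnit A.det) (hW : W.PosSemidef)
    (hY₁ : Y₁.PosDef) (hY₂ : Y₂.PosDef) (hle : (Y₂ - Y₁).PosSemidef) :
    ((A * Y₂⁻¹ * Aᵀ + W)⁻¹ - (A * Y₁⁻¹ * Aᵀ + W)⁻¹).PosSemidef := by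
  have hinv : (Y₁⁻¹ - Y₂⁻¹).PosSemidef := inv_sub_inv_posSemidef hY₁ hY₂ hle
  have hB₁ : (A * Y₁⁻¹ * Aᵀ + W).PosDef :=
    (conj_posDef A hA hY₁.inv).add_posSemidef hW
  have hB₂ : (A * Y₂⁻¹ * Aᵀ + W).PosDef :=
    (conj_posDef A hA hY₂.inv).add_posSemidef hW
  have hdiff : ((A * Y₁⁻¹ * Aᵀ + W) - (A * Y₂⁻¹ * Aᵀ + W)).PosSemidef := by
    have h := hinv.mul_mul_conjTranspose_same A
    have e : (A * Y₁⁻¹ * Aᵀ + W) - (A * Y₂⁻¹ * Aᵀ + W) = A * (Y₁⁻¹ - Y₂⁻¹) * Aᵀ := by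
      noncomm_ring
    rw [e]
    simpa [conjTranspose_eq_transpose_of_trivial, Matrix.mul_assoc] using h
  exact inv_sub_inv_posSemidef hB₂ hB₁ hdiff
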